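/- Let d ≥ 1, let 0 < r < π/4, let p₀ ∈ S^d, and let x, y, z ∈ B_r(p₀). Then ρ(x, z)² ≤ ρ(y, z)² − 2·⟨log_y z, log_y x⟩ + ρ(y, x)². -/

import Mathlib

namespace SphSmoothAux
open Real Set

-- Lemma A
lemma lemA {s : ℝ} (h0 : 0 ≤ s) (h1 : s ≤ π) : s * Real.cos s ≤ Real.sin s := by
  rcases lt_or_ge s (π/2) with h | h
  · rcases eq_or_lt_of_le h0 with rfl | h0'
    · simp
    · have hc : 0 < Real.cos s := Real.cos_pos_of_mem_Ioo ⟨by linarith [Real.pi_pos], h⟩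
      have ht := Real.lt_tan h0' h
      rw [Real.tan_eq_sin_div_cos] at ht
      calc s * Real.cos s ≤ (Real.sin s / Real.cos s) * Real.cos s := by
            exact mul_le_mul_of_nonneg_right ht.le hc.le
        _ = Real.sin s := by field_simp
  · have hc : Real.cos s ≤ 0 := Real.cos_nonpos_of_pi_div_two_le_of_le h (by linarith [Real.pi_pos])
    have hs : 0 ≤ Real.sin s := Real.sin_nonneg_of_nonneg_of_le_pi h0 h1
    nlinarith

-- Lemma B: convexity of cos ∘ sqrt
lemma lemB : ConvexOn ℝ (Icc (0:ℝ) (π^2)) (fun w => Real.cos (Real.sqrt w)) := by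
  have hD : Convex ℝ (Icc (0:ℝ) (π^2)) := convex_Icc _ _
  refine convexOn_of_hasDerivWithinAt2_nonneg hD
    (f' := fun w => -(Real.sin (Real.sqrt w) / (2 * Real.sqrt w)))
    (f'' := fun w => (Real.sin (Real.sqrt w) / Real.sqrt w - Real.cos (Real.sqrt w)) / (4*w))
    ((Real.continuous_cos.comp Real.continuous_sqrt).continuousOn) ?_ ?_ ?_
  · intro w hw
    rw [interior_Icc] at hw
    have hw0 : (0:ℝ) < w := hw.1
    have hu0 : 0 < Real.sqrt w := Real.sqrt_pos.mpr hw0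
    have h1 : HasDerivAt (fun w => Real.cos (Real.sqrt w))
        (-Real.sin (Real.sqrt w) * (1 / (2 * Real.sqrt w))) w :=
      (Real.hasDerivAt_cos _).comp w (Real.hasDerivAt_sqrt hw0.ne')
    refine h1.hasDerivWithinAt.congr_deriv ?_
    field_simp
  · intro w hw
    rw [interior_Icc] at hw
    have hw0 : (0:ℝ) < w := hw.1
    have hu0 : 0 < Real.sqrt w := Real.sqrt_pos.mpr hw0
    have hs : HasDerivAt Real.sqrt (1 / (2 * Real.sqrt w)) w := Real.hasDerivAt_sqrt hw0.ne'
    have hn : HasDerivAt (fun w => Real.sin (Real.sqrt w))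
        (Real.cos (Real.sqrt w) * (1 / (2 * Real.sqrt w))) w :=
      (Real.hasDerivAt_sin _).comp w hs
    have hd : HasDerivAt (fun w => 2 * Real.sqrt w) (2 * (1 / (2 * Real.sqrt w))) w :=
      hs.const_mul 2
    have hden : 2 * Real.sqrt w ≠ 0 := by positivity
    have hq := (hn.div hd hden).neg
    refine hq.hasDerivWithinAt.congr_deriv ?_
    set u := Real.sqrt w with hu
    rw [show w = u^2 from (Real.sq_sqrt hw0.le).symm]
    have hu' : u ≠ 0 := hu0.ne'
    field_simp
    ring
  · intro w hw
    rw [interior_Icc] at hw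
    have hw0 : (0:ℝ) < w := hw.1
    have hu0 : 0 < Real.sqrt w := Real.sqrt_pos.mpr hw0
    have huπ : Real.sqrt w ≤ π := by
      rw [show π = Real.sqrt (π^2) by rw [Real.sqrt_sq Real.pi_pos.le]]
      exact Real.sqrt_le_sqrt hw.2.le
    have := lemA hu0.le huπ
    have h2 : Real.cos (Real.sqrt w) ≤ Real.sin (Real.sqrt w) / Real.sqrt w := by
      rw [le_div_iff₀ hu0]; nlinarith
    have : 0 ≤ Real.sin (Real.sqrt w) / Real.sqrt w - Real.cos (Real.sqrt w) := by linarith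
    positivity

-- Lemma C
lemma lemC {a b t : ℝ} (ha : 0 ≤ a) (hb : 0 ≤ b) (hab : a + b ≤ π)
    (ht : -1 ≤ t) (ht' : t ≤ 1) :
    Real.cos (Real.sqrt (a^2 + b^2 - 2*a*b*t)) ≤
      Real.cos a * Real.cos b + t * (Real.sin a * Real.sin b) := by
  have hl : (0:ℝ) ≤ (1+t)/2 := by linarith
  have hm : (0:ℝ) ≤ (1-t)/2 := by linarith
  have hsum : (1+t)/2 + (1-t)/2 = 1 := by ring
  have hp : (a-b)^2 ∈ Icc (0:ℝ) (π^2) := by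
    constructor
    · positivity
    · nlinarith [Real.pi_pos]
  have hq : (a+b)^2 ∈ Icc (0:ℝ) (π^2) := by
    constructor
    · positivity
    · nlinarith [Real.pi_pos]
  have key := lemB.2 hp hq hl hm hsum
  simp only [smul_eq_mul] at key
  have e1 : (1+t)/2 * (a-b)^2 + (1-t)/2 * (a+b)^2 = a^2 + b^2 - 2*a*b*t := by ring
  have e2 : Real.sqrt ((a-b)^2) = |a - b| := Real.sqrt_sq_eq_abs _
  have e3 : Real.sqrt ((a+b)^2) = a + b := Real.sqrt_sq (by linarith)
  rw [e1, e2, e3] at key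
  have e4 : Real.cos |a - b| = Real.cos (a - b) := Real.cos_abs _
  rw [e4, Real.cos_sub, Real.cos_add] at key
  calc Real.cos (Real.sqrt (a^2 + b^2 - 2*a*b*t)) ≤ _ := key
    _ = Real.cos a * Real.cos b + t * (Real.sin a * Real.sin b) := by ring

-- projection Cauchy–Schwarz
lemma projCS {n : ℕ} (p u v : EuclideanSpace ℝ (Fin n))
    (hp : ‖p‖ = 1) (hu : ‖u‖ = 1) (hv : ‖v‖ = 1) :
    |(inner ℝ u v : ℝ) - (inner ℝ p u : ℝ) * (inner ℝ p v : ℝ)| ≤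
      Real.sqrt (1 - (inner ℝ p u : ℝ)^2) * Real.sqrt (1 - (inner ℝ p v : ℝ)^2) := by
  have hpp : (inner ℝ p p : ℝ) = 1 := by
    rw [real_inner_self_eq_norm_sq, hp]; norm_num
  have hiu : (inner ℝ (u - (inner ℝ p u : ℝ) • p) (v - (inner ℝ p v : ℝ) • p) : ℝ)
      = (inner ℝ u v : ℝ) - (inner ℝ p u : ℝ) * (inner ℝ p v : ℝ) := by
    simp only [inner_sub_left, inner_sub_right, real_inner_smul_left, real_inner_smul_right,
      hpp, real_inner_comm u p, real_inner_comm v p]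
    ring
  have hun : ‖u - (inner ℝ p u : ℝ) • p‖^2 = 1 - (inner ℝ p u : ℝ)^2 := by
    rw [← real_inner_self_eq_norm_sq]
    simp only [inner_sub_left, inner_sub_right, real_inner_smul_left, real_inner_smul_right,
      hpp, real_inner_comm u p]
    rw [real_inner_self_eq_norm_sq, hu]; ring
  have hvn : ‖v - (inner ℝ p v : ℝ) • p‖^2 = 1 - (inner ℝ p v : ℝ)^2 := by
    rw [← real_inner_self_eq_norm_sq]
    simp only [inner_sub_left, inner_sub_right, real_inner_smul_left, real_inner_smul_right,
      hpp, real_inner_comm v p]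
    rw [real_inner_self_eq_norm_sq, hv]; ring
  have hun' : ‖u - (inner ℝ p u : ℝ) • p‖ = Real.sqrt (1 - (inner ℝ p u : ℝ)^2) := by
    rw [← hun, Real.sqrt_sq (norm_nonneg _)]
  have hvn' : ‖v - (inner ℝ p v : ℝ) • p‖ = Real.sqrt (1 - (inner ℝ p v : ℝ)^2) := by
    rw [← hvn, Real.sqrt_sq (norm_nonneg _)]
  calc |(inner ℝ u v : ℝ) - (inner ℝ p u : ℝ) * (inner ℝ p v : ℝ)|
      = |(inner ℝ (u - (inner ℝ p u : ℝ) • p) (v - (inner ℝ p v : ℝ) • p) : ℝ)| := by rw [hiu]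
    _ ≤ ‖u - (inner ℝ p u : ℝ) • p‖ * ‖v - (inner ℝ p v : ℝ) • p‖ := abs_real_inner_le_norm _ _
    _ = _ := by rw [hun', hvn']

end SphSmoothAux

open Real Set SphSmoothAux

/-- Geodesic distance on the unit sphere `S^d ⊂ ℝ^(d+1)`: `ρ(p,q) = arccos ⟨p,q⟩`. -/
noncomputable def sphDist {d : ℕ} (p q : EuclideanSpace ℝ (Fin (d + 1))) : ℝ :=
  Real.arccos (inner ℝ p q)

/-- Inverse exponential (log) map on the unit sphere:
`log_p q = (θ / sin θ) (q - cos θ • p)` with `θ = ρ(p,q)` (and `log_p p = 0`). -/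
noncomputable def sphLog {d : ℕ} (p q : EuclideanSpace ℝ (Fin (d + 1))) :
    EuclideanSpace ℝ (Fin (d + 1)) :=
  (sphDist p q / Real.sin (sphDist p q)) • (q - Real.cos (sphDist p q) • p)

/-- Geodesic smoothness (Lipschitz-gradient) inequality for the squared distance on
the unit sphere with parameter `h_min(2r,1) = 1`: for `x, y, z` in a geodesic ball
of radius `r < π/4`, `ρ(x,z)² ≤ ρ(y,z)² − 2⟨log_y z, log_y x⟩ + ρ(y,x)²`. -/

theorem sphere_dist_sq_smoothness (d : ℕ) (hd : 1 ≤ d)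
    (r : ℝ) (hr0 : 0 < r) (hr : r < Real.pi / 4)
    (p₀ : EuclideanSpace ℝ (Fin (d + 1))) (hp₀ : ‖p₀‖ = 1)
    (x y z : EuclideanSpace ℝ (Fin (d + 1)))
    (hx : ‖x‖ = 1 ∧ sphDist p₀ x < r)
    (hy : ‖y‖ = 1 ∧ sphDist p₀ y < r)
    (hz : ‖z‖ = 1 ∧ sphDist p₀ z < r) :
    sphDist x z ^ 2 ≤
      sphDist y z ^ 2 - 2 * (inner ℝ (sphLog y z) (sphLog y x) : ℝ) +
        sphDist y x ^ 2 := by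
  obtain ⟨hx1, hxr⟩ := hx
  obtain ⟨hy1, hyr⟩ := hy
  obtain ⟨hz1, hzr⟩ := hz
  -- inner ℝ products are in [-1,1]
  have habs : ∀ u v : EuclideanSpace ℝ (Fin (d+1)), ‖u‖ = 1 → ‖v‖ = 1 →
      |(inner ℝ u v : ℝ)| ≤ 1 := by
    intro u v hu hv
    have := abs_real_inner_le_norm u v
    rwa [hu, hv, mul_one] at this
  -- positivity of inner ℝ products within the ball
  have hpos : ∀ u v : EuclideanSpace ℝ (Fin (d+1)), ‖u‖ = 1 → ‖v‖ = 1 →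
      sphDist p₀ u < r → sphDist p₀ v < r → 0 < (inner ℝ u v : ℝ) := by
    intro u v hu hv hur hvr
    have hcs := SphSmoothAux.projCS p₀ u v hp₀ hu hv
    have hαu : (-1:ℝ) ≤ (inner ℝ p₀ u : ℝ) ∧ (inner ℝ p₀ u : ℝ) ≤ 1 :=
      abs_le.mp (habs p₀ u hp₀ hu)
    have hαv : (-1:ℝ) ≤ (inner ℝ p₀ v : ℝ) ∧ (inner ℝ p₀ v : ℝ) ≤ 1 :=
      abs_le.mp (habs p₀ v hp₀ hv)
    set α := sphDist p₀ u with hα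
    set β := sphDist p₀ v with hβ
    have hcosα : Real.cos α = (inner ℝ p₀ u : ℝ) := Real.cos_arccos hαu.1 hαu.2
    have hcosβ : Real.cos β = (inner ℝ p₀ v : ℝ) := Real.cos_arccos hαv.1 hαv.2
    have hsinα : Real.sin α = Real.sqrt (1 - (inner ℝ p₀ u : ℝ)^2) := Real.sin_arccos _
    have hsinβ : Real.sin β = Real.sqrt (1 - (inner ℝ p₀ v : ℝ)^2) := Real.sin_arccos _
    have hα0 : 0 ≤ α := Real.arccos_nonneg _
    have hβ0 : 0 ≤ β := Real.arccos_nonneg _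
    have hsum : α + β < π/2 := by linarith
    have hcos_sum : 0 < Real.cos (α + β) :=
      Real.cos_pos_of_mem_Ioo ⟨by linarith [Real.pi_pos], hsum⟩
    rw [Real.cos_add, hcosα, hcosβ, hsinα, hsinβ] at hcos_sum
    have := abs_le.mp hcs
    linarith
  by_cases hbx : sphDist y x = 0
  · -- x = y
    have h1 : (inner ℝ y x : ℝ) = 1 := by
      have := Real.arccos_eq_zero.mp hbx
      have h2 := (abs_le.mp (habs y x hy1 hx1)).2
      linarith
    have hxy : x = y := by
      have h2 : ‖y - x‖^2 = 0 := by
        rw [norm_sub_sq_real, hy1, hx1, h1]; norm_num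
      have : y - x = 0 :=
        norm_eq_zero.mp ((pow_eq_zero_iff (n := 2) (by norm_num)).mp h2)
      linear_combination (norm := module) -this
    subst hxy
    have hd0 : sphDist x x = 0 := by
      rw [show sphDist x x = Real.arccos (inner ℝ x x) from rfl,
        show (inner ℝ x x : ℝ) = 1 by rw [real_inner_self_eq_norm_sq, hx1]; norm_num,
        Real.arccos_one]
    have hlog0 : sphLog x x = 0 := by
      rw [sphLog, hd0]
      simp
    rw [hd0, hlog0, inner_zero_right]
    norm_num
  by_cases hbz : sphDist y z = 0
  · -- z = y
    have h1 : (inner ℝ y z : ℝ) = 1 := by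
      have := Real.arccos_eq_zero.mp hbz
      have h2 := (abs_le.mp (habs y z hy1 hz1)).2
      linarith
    have hzy : z = y := by
      have h2 : ‖y - z‖^2 = 0 := by
        rw [norm_sub_sq_real, hy1, hz1, h1]; norm_num
      have : y - z = 0 :=
        norm_eq_zero.mp ((pow_eq_zero_iff (n := 2) (by norm_num)).mp h2)
      linear_combination (norm := module) -this
    rw [hzy]
    have hd0 : sphDist y y = 0 := by
      rw [show sphDist y y = Real.arccos (inner ℝ y y) from rfl,
        show (inner ℝ y y : ℝ) = 1 by rw [real_inner_self_eq_norm_sq, hy1]; norm_num,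
        Real.arccos_one]
    have hlog0 : sphLog y y = 0 := by
      rw [sphLog, hd0]
      simp
    have hsymm : sphDist x y = sphDist y x := by
      show Real.arccos (inner ℝ x y) = Real.arccos (inner ℝ y x)
      rw [real_inner_comm]
    rw [hd0, hlog0, inner_zero_left, hsymm]
    norm_num
  -- main case
  set ca : ℝ := inner ℝ y z with hca
  set cb : ℝ := inner ℝ y x with hcb
  set cc : ℝ := inner ℝ x z with hcc
  have hca1 := abs_le.mp (habs y z hy1 hz1)
  have hcb1 := abs_le.mp (habs y x hy1 hx1)
  have hcc1 := abs_le.mp (habs x z hx1 hz1)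
  set a : ℝ := sphDist y z with had
  set b : ℝ := sphDist y x with hbd
  set c : ℝ := sphDist x z with hcd
  have hcosa : Real.cos a = ca := Real.cos_arccos hca1.1 hca1.2
  have hcosb : Real.cos b = cb := Real.cos_arccos hcb1.1 hcb1.2
  have hcosc : Real.cos c = cc := Real.cos_arccos hcc1.1 hcc1.2
  have hsina : Real.sin a = Real.sqrt (1 - ca^2) := Real.sin_arccos _
  have hsinb : Real.sin b = Real.sqrt (1 - cb^2) := Real.sin_arccos _
  have ha0 : 0 ≤ a := Real.arccos_nonneg _
  have hb0 : 0 ≤ b := Real.arccos_nonneg _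
  have hc0 : 0 ≤ c := Real.arccos_nonneg _
  have hcπ : c ≤ π := Real.arccos_le_pi _
  have hca0 : 0 < ca := hpos y z hy1 hz1 hyr hzr
  have hcb0 : 0 < cb := hpos y x hy1 hx1 hyr hxr
  have ha2 : a < π/2 := Real.arccos_lt_pi_div_two.mpr hca0
  have hb2 : b < π/2 := Real.arccos_lt_pi_div_two.mpr hcb0
  have hapos : 0 < a := lt_of_le_of_ne ha0 (Ne.symm hbz)
  have hbpos : 0 < b := lt_of_le_of_ne hb0 (Ne.symm hbx)
  have hsa : 0 < Real.sin a :=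
    Real.sin_pos_of_pos_of_lt_pi hapos (by linarith [Real.pi_pos])
  have hsb : 0 < Real.sin b :=
    Real.sin_pos_of_pos_of_lt_pi hbpos (by linarith [Real.pi_pos])
  set t : ℝ := (cc - cb * ca) / (Real.sin a * Real.sin b) with htdef
  have hcs := SphSmoothAux.projCS y x z hy1 hx1 hz1
  rw [← hcc, ← hcb, ← hca, ← hsinb, ← hsina] at hcs
  have ht1 : |t| ≤ 1 := by
    have hab0 : (0:ℝ) < Real.sin a * Real.sin b := mul_pos hsa hsb
    rw [htdef, abs_div, abs_of_pos hab0, div_le_one hab0]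
    calc |cc - cb * ca| ≤ Real.sin b * Real.sin a := hcs
      _ = Real.sin a * Real.sin b := by ring
  have htl := (abs_le.mp ht1).1
  have htu := (abs_le.mp ht1).2
  -- compute the inner ℝ product of the logs
  have hlogz : sphLog y z = (a / Real.sin a) • (z - Real.cos a • y) := rfl
  have hlogx : sphLog y x = (b / Real.sin b) • (x - Real.cos b • y) := rfl
  have e1 : (inner ℝ z x : ℝ) = cc := by rw [hcc]; exact real_inner_comm _ _
  have e2 : (inner ℝ z y : ℝ) = ca := by rw [hca]; exact real_inner_comm _ _
  have e3 : (inner ℝ y x : ℝ) = cb := hcb.symm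
  have hexp : (inner ℝ (z - Real.cos a • y) (x - Real.cos b • y) : ℝ) = cc - ca * cb := by
    simp only [inner_sub_left, inner_sub_right, real_inner_smul_left, real_inner_smul_right]
    rw [real_inner_self_eq_norm_sq, hy1, hcosa, hcosb, e1, e2, e3]
    ring
  clear_value a b c ca cb cc t
  have hinner : (inner ℝ (sphLog y z) (sphLog y x) : ℝ) = a * b * t := by
    rw [hlogz, hlogx, real_inner_smul_left, real_inner_smul_right, hexp, htdef]
    field_simp
  rw [hinner]
  clear hlogz hlogx hexp e1 e2 e3 hca hcb hcc had hbd hcd habs hpos hcs ht1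
  clear hx1 hxr hy1 hyr hz1 hzr hp₀ hsina hsinb hca1 hcb1 hcc1 hbx hbz hca0 hcb0
  clear hinner x y z p₀ hd hr hr0 r
  -- key inequality
  have hab : a + b ≤ π := by linarith [Real.pi_pos]
  have hkey := SphSmoothAux.lemC ha0 hb0 hab htl htu
  have hts : t * (Real.sin a * Real.sin b) = cc - cb * ca := by
    rw [htdef]
    exact div_mul_cancel₀ _ (ne_of_gt (mul_pos hsa hsb))
  rw [hcosa, hcosb, hts] at hkey
  have hkey' : Real.cos (Real.sqrt (a^2 + b^2 - 2*a*b*t)) ≤ Real.cos c := by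
    rw [hcosc]; linarith
  -- deduce c ≤ sqrt(...)
  have hab1 : 0 ≤ a * b * (1 - t) := by
    apply mul_nonneg (mul_nonneg ha0 hb0); linarith
  have hab2 : 0 ≤ a * b * (1 + t) := by
    apply mul_nonneg (mul_nonneg ha0 hb0); linarith
  have harg0 : 0 ≤ a^2 + b^2 - 2*a*b*t := by nlinarith [sq_nonneg (a - b)]
  have hsπ : Real.sqrt (a^2 + b^2 - 2*a*b*t) ≤ π := by
    have h1 : a^2 + b^2 - 2*a*b*t ≤ (a+b)^2 := by nlinarith [hab2]
    calc Real.sqrt (a^2 + b^2 - 2*a*b*t) ≤ Real.sqrt ((a+b)^2) := Real.sqrt_le_sqrt h1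
      _ = a + b := Real.sqrt_sq (by linarith)
      _ ≤ π := hab
  have hcs' : c ≤ Real.sqrt (a^2 + b^2 - 2*a*b*t) := by
    by_contra h
    push_neg at h
    have := Real.cos_lt_cos_of_nonneg_of_le_pi (Real.sqrt_nonneg _) hcπ h
    linarith
  have hfin : c^2 ≤ a^2 + b^2 - 2*a*b*t := by
    have := pow_le_pow_left₀ hc0 hcs' 2
    rwa [Real.sq_sqrt harg0] at this
  linarith
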